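/- For the multinomial normalization term C₁(K, n) = ∑_{h₁+⋯+h_K = n} (n! / (h₁!⋯h_K!)) ∏_{k=1}^{K} (h_k/n)^{h_k} (with the convention 0⁰ = 1), the recursion C₁(K+2, n) = C₁(K+1, n) + (n/K)·C₁(K, n) holds for all integers K ≥ 1 and n ≥ 1. -/

import Mathlib

open Finset
open PowerSeries

lemma findiff : ∀ N : ℕ, ∀ j < N, ∀ x : ℝ,
    ∑ k ∈ range (N + 1), (-1 : ℝ) ^ k * (N.choose k : ℝ) * (x + k) ^ j = 0 := by
  intro N
  induction N with
  | zero => intro j hj; omega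
  | succ N ih =>
    intro j hj x
    have key : ∀ i : ℕ, (x + i + 1) ^ j - (x + i) ^ j
        = ∑ m ∈ range j, (j.choose m : ℝ) * (x + i) ^ m := by
      intro i
      rw [add_pow, sum_range_succ]
      simp [mul_comm]
    have split := Finset.sum_choose_succ_mul
      (fun i _ => (-1 : ℝ) ^ i * (x + i) ^ j) N
    calc ∑ k ∈ range (N + 1 + 1), (-1 : ℝ) ^ k * ((N+1).choose k : ℝ) * (x + k) ^ j
        = ∑ k ∈ range (N + 2), ((N+1).choose k : ℝ) * ((-1 : ℝ) ^ k * (x + k) ^ j) := by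
          apply Finset.sum_congr rfl; intros; ring
      _ = (∑ i ∈ range (N + 1), (N.choose i : ℝ) * ((-1:ℝ)^i * (x + i) ^ j))
          + ∑ i ∈ range (N + 1), (N.choose i : ℝ) * ((-1:ℝ)^(i+1) * (x + ((i+1 : ℕ):ℝ)) ^ j) := split
      _ = ∑ i ∈ range (N + 1), (N.choose i : ℝ) * ((-1:ℝ)^i *
            ((x + i) ^ j - (x + i + 1) ^ j)) := by
          rw [← Finset.sum_add_distrib]
          apply Finset.sum_congr rfl; intro i _
          push_cast
          ring
      _ = ∑ i ∈ range (N + 1), ∑ m ∈ range j, (-1:ℝ) * (j.choose m : ℝ) *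
            ((-1:ℝ)^i * (N.choose i : ℝ) * (x + i) ^ m) := by
          apply Finset.sum_congr rfl; intro i _
          have h2 : (x + (i:ℝ)) ^ j - (x + i + 1) ^ j
              = -∑ m ∈ range j, (j.choose m : ℝ) * (x + i) ^ m := by
            rw [← key i]; ring
          rw [h2]
          simp only [mul_neg, Finset.mul_sum, ← Finset.sum_neg_distrib]
          apply Finset.sum_congr rfl; intros; ring
      _ = 0 := by
          rw [Finset.sum_comm]
          apply Finset.sum_eq_zero; intro m hm
          rw [← Finset.mul_sum]
          rw [ih m (lt_of_lt_of_le (mem_range.mp hm) (Nat.lt_succ_iff.mp hj)) x]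
          ring

lemma auxchoose (n k : ℕ) : (n+1).choose (k+1) * (n-k) = (n+1) * n.choose (k+1) :=
  calc (n+1).choose (k+1) * (n-k)
      = (n+1).choose (k+1) * ((n+1) - (k+1)) := by rw [Nat.succ_sub_succ]
    _ = (n+1).choose (k+1+1) * (k+1+1) := (Nat.choose_succ_right_eq (n+1) (k+1)).symm
    _ = (n+1) * n.choose (k+1) := (Nat.add_one_mul_choose_eq n (k+1)).symm

lemma abelQ : ∀ n : ℕ, 1 ≤ n → ∀ x : ℝ,
    ∑ k ∈ range n, ((n.choose (k+1) : ℝ)) * ((k:ℝ)+1)^k * (x - ((k:ℝ)+1)) ^ (n-1-k)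
      = n * x^(n-1) := by
  intro n hn
  induction n, hn using Nat.le_induction with
  | base => intro x; simp
  | succ n hn ih =>
    intro x
    have hexp : ∀ k : ℕ, n + 1 - 1 - k = n - k := fun k => by omega
    set f : ℝ → ℝ := fun y =>
      ∑ k ∈ range (n+1), (((n+1).choose (k+1) : ℝ)) * ((k:ℝ)+1)^k * (y - ((k:ℝ)+1)) ^ (n-k)
      with hf_def
    have hderiv : ∀ y : ℝ, HasDerivAt f (((n:ℝ)+1) * ((n:ℝ) * y^(n-1))) y := by
      intro y
      have h1 : HasDerivAt f
          (∑ k ∈ range (n+1), (((n+1).choose (k+1) : ℝ)) * ((k:ℝ)+1)^k *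
            (((n-k : ℕ):ℝ) * (y - ((k:ℝ)+1)) ^ (n-k-1) * 1)) y := by
        apply HasDerivAt.fun_sum
        intro k hk
        exact ((((hasDerivAt_id y).sub_const (((k:ℝ)+1))).pow (n-k)).const_mul _)
      convert h1 using 1
      rw [sum_range_succ]
      simp only [Nat.sub_self, Nat.cast_zero, zero_mul, mul_zero, mul_one, add_zero,
        pow_zero]
      rw [← ih y, Finset.mul_sum]
      apply Finset.sum_congr rfl
      intro k hk
      have hc : (((n+1).choose (k+1) : ℝ)) * ((n-k : ℕ):ℝ) = ((n:ℝ)+1) * (n.choose (k+1) : ℝ) := by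
        rw [← Nat.cast_mul, auxchoose n k, Nat.cast_mul]
        push_cast
        ring
      have he : n - k - 1 = n - 1 - k := by omega
      rw [he]
      calc ((n:ℝ)+1) * ((n.choose (k+1):ℝ) * ((k:ℝ)+1)^k * (y - ((k:ℝ)+1)) ^ (n-1-k))
          = ((((n+1).choose (k+1) : ℝ)) * ((n-k : ℕ):ℝ)) * (((k:ℝ)+1)^k * (y - ((k:ℝ)+1)) ^ (n-1-k)) := by
            rw [hc]; ring
        _ = ((n+1).choose (k+1) : ℝ) * ((k:ℝ)+1)^k * (((n-k : ℕ):ℝ) * (y - ((k:ℝ)+1)) ^ (n-1-k)) := by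
            ring
    -- value at 0
    have hf0 : f 0 = 0 := by
      have F := findiff (n+1) n (Nat.lt_succ_self n) 0
      rw [Finset.sum_range_succ'] at F
      simp only [pow_zero, Nat.choose_zero_right, Nat.cast_one, one_mul, Nat.cast_zero,
        add_zero, zero_pow (Nat.one_le_iff_ne_zero.mp hn), mul_one, mul_zero] at F
      -- F : ∑ k ∈ range (n+1), (-1)^(k+1) * ((n+1).choose (k+1)) * (0 + ↑(k+1))^n + 0 = 0
      have F' : ∑ k ∈ range (n+1), (-1:ℝ)^(k+1) * ((n+1).choose (k+1) : ℝ) * (((k:ℝ))+1)^n = 0 := by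
        rw [← F]
        apply Finset.sum_congr rfl
        intro k _
        push_cast
        ring
      have : f 0 = (-1:ℝ)^(n+1) *
          ∑ k ∈ range (n+1), (-1:ℝ)^(k+1) * ((n+1).choose (k+1) : ℝ) * (((k:ℝ))+1)^n := by
        rw [hf_def, Finset.mul_sum]
        apply Finset.sum_congr rfl
        intro k hk
        have hkn : k ≤ n := Nat.lt_succ_iff.mp (mem_range.mp hk)
        have hpow : ((k:ℝ)+1)^k * ((k:ℝ)+1)^(n-k) = ((k:ℝ)+1)^n := by
          rw [← pow_add]; congr 1; omega
        have hsgn : (-1:ℝ)^(n-k) = (-1:ℝ)^(n+1) * (-1:ℝ)^(k+1) := by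
          rw [← pow_add, show (n+1)+(k+1) = (n-k) + 2*(k+1) by omega, pow_add, pow_mul]
          norm_num
        calc ((n+1).choose (k+1) : ℝ) * ((k:ℝ)+1)^k * ((0:ℝ) - ((k:ℝ)+1)) ^ (n-k)
            = ((n+1).choose (k+1) : ℝ) * ((k:ℝ)+1)^k * ((-1:ℝ)^(n-k) * ((k:ℝ)+1)^(n-k)) := by
              rw [zero_sub, neg_pow]
          _ = (-1:ℝ)^(n-k) * (((n+1).choose (k+1) : ℝ) * (((k:ℝ)+1)^k * ((k:ℝ)+1)^(n-k))) := by ring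
          _ = (-1:ℝ)^(n+1) * ((-1:ℝ)^(k+1) * ((n+1).choose (k+1) : ℝ) * ((k:ℝ)+1)^n) := by
              rw [hpow, hsgn]; ring
      rw [this, F', mul_zero]
    -- constancy
    have hg : ∀ y : ℝ, HasDerivAt (fun y => f y - ((n:ℝ)+1) * y^n) 0 y := by
      intro y
      have h2 : HasDerivAt (fun y : ℝ => ((n:ℝ)+1) * y^n) (((n:ℝ)+1) * ((n:ℝ) * y^(n-1))) y :=
        (hasDerivAt_pow n y).const_mul _
      simpa using (hderiv y).fun_sub h2
    have hconst : f x - ((n:ℝ)+1) * x^n = f 0 - ((n:ℝ)+1) * 0^n :=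
      is_const_of_deriv_eq_zero (fun y => (hg y).differentiableAt)
        (fun y => (hg y).deriv) x 0
    have hx : f x = ((n:ℝ)+1) * x^n := by
      rw [zero_pow (Nat.one_le_iff_ne_zero.mp hn), hf0] at hconst
      linarith [hconst]
    calc ∑ k ∈ range (n+1), (((n+1).choose (k+1) : ℝ)) * ((k:ℝ)+1)^k *
          (x - ((k:ℝ)+1)) ^ (n+1-1-k)
        = f x := by
          apply Finset.sum_congr rfl; intro k _; rw [hexp k]
      _ = ((n:ℝ)+1) * x^n := hx
      _ = ((n+1 : ℕ):ℝ) * x^(n+1-1) := by push_cast; ring_nf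

noncomputable def bb (m : ℕ) : ℝ := (m:ℝ)^m / (m.factorial)
noncomputable def tt (m : ℕ) : ℝ := if m = 0 then 0 else (m:ℝ)^(m-1) / (m.factorial)

lemma key_conv (n : ℕ) (hn : 1 ≤ n) :
    ∑ p ∈ Finset.HasAntidiagonal.antidiagonal n, tt p.1 * bb p.2 = bb n := by
  rw [Finset.Nat.sum_antidiagonal_eq_sum_range_succ_mk, Finset.sum_range_succ']
  simp only [tt]
  norm_num
  -- goal: ∑ k ∈ range n, (↑(k+1))^k / (k+1)! * bb (n - (k+1)) = bb n
  have habel := abelQ n hn (n : ℝ)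
  have hnn : (n:ℝ) * (n:ℝ)^(n-1) = (n:ℝ)^n := by
    rw [← pow_succ']; congr 1; omega
  rw [hnn] at habel
  have hstep : ∑ k ∈ range n, ((n.choose (k+1) : ℝ)) * ((k:ℝ)+1)^k *
      (((n-(k+1) : ℕ)):ℝ) ^ (n-1-k) = (n:ℝ)^n := by
    rw [← habel]
    apply Finset.sum_congr rfl
    intro k hk
    have hkn : k + 1 ≤ n := mem_range.mp hk
    congr 2
    push_cast [Nat.cast_sub hkn]
    ring
  -- now divide by n!
  have hfac : (n.factorial : ℝ) ≠ 0 := Nat.cast_ne_zero.mpr n.factorial_ne_zero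
  rw [show bb n = (n:ℝ)^n / n.factorial from rfl, ← hstep, Finset.sum_div]
  apply Finset.sum_congr rfl
  intro k hk
  have hkn : k + 1 ≤ n := mem_range.mp hk
  have hcf := Nat.choose_mul_factorial_mul_factorial hkn
  have hcfR : ((n.choose (k+1) : ℝ)) * ((k+1).factorial : ℝ) * (((n-(k+1)).factorial : ℝ))
      = (n.factorial : ℝ) := by exact_mod_cast congrArg Nat.cast hcf
  have h1 : (((k+1).factorial : ℝ)) ≠ 0 := Nat.cast_ne_zero.mpr (Nat.factorial_ne_zero _)
  have h2 : ((((n-(k+1)).factorial : ℝ))) ≠ 0 := Nat.cast_ne_zero.mpr (Nat.factorial_ne_zero _)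
  rw [show bb (n - (k+1)) = (((n-(k+1) : ℕ)):ℝ) ^ (n - (k+1)) / ((n-(k+1)).factorial : ℝ) from rfl]
  have hexp : n - (k+1) = n - 1 - k := by omega
  rw [hexp] at hcfR h2 ⊢
  field_simp
  rw [← hcfR]
  ring


noncomputable def Bs : PowerSeries ℝ := PowerSeries.mk bb
noncomputable def Ts : PowerSeries ℝ := PowerSeries.mk tt

lemma hTB : Ts * Bs = Bs - 1 := by
  ext n
  rw [PowerSeries.coeff_mul]
  cases n with
  | zero =>
    simp [Ts, Bs, tt, bb]
  | succ m =>
    rw [Finset.sum_congr rfl (fun p _ => by rw [Bs, Ts, coeff_mk, coeff_mk])]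
    rw [key_conv (m+1) (Nat.succ_le_succ (Nat.zero_le m))]
    simp [Bs, coeff_mk]

lemma hXdT : X * (d⁄dX ℝ Ts) = Ts * Bs := by
  ext n
  cases n with
  | zero =>
    rw [PowerSeries.coeff_zero_eq_constantCoeff, map_mul, map_mul, constantCoeff_X, zero_mul]
    have : constantCoeff Ts = 0 := by simp [Ts, tt]
    rw [this, zero_mul]
  | succ m =>
    rw [PowerSeries.coeff_succ_X_mul, PowerSeries.coeff_derivative, hTB]
    simp only [map_sub, PowerSeries.coeff_one, Nat.succ_ne_zero, if_false, sub_zero]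
    rw [Ts, Bs, coeff_mk, coeff_mk, tt, bb, if_neg (Nat.succ_ne_zero m)]
    have : ((m+1 : ℕ):ℝ) ^ (m+1) = ((m+1 : ℕ):ℝ)^(m+1-1) * ((m:ℝ)+1) := by
      rw [show m+1-1 = m from rfl, pow_succ]
      push_cast
      ring
    rw [this]
    ring

lemma hBinv : Bs * (1 - Ts) = 1 := by
  rw [mul_sub, mul_one, mul_comm Bs Ts, hTB]
  ring

lemma hXdB : X * (d⁄dX ℝ Bs) = Ts * Bs^3 := by
  have hd : (1 - Ts) * (d⁄dX ℝ Bs) = (d⁄dX ℝ Ts) * Bs := by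
    have h0 := congrArg (d⁄dX ℝ) hTB
    rw [Derivation.leibniz, map_sub, Derivation.map_one_eq_zero, sub_zero,
      smul_eq_mul, smul_eq_mul] at h0
    linear_combination -h0
  have h3 : (1 - Ts) * (X * (d⁄dX ℝ Bs)) = Ts * Bs^2 := by
    calc (1 - Ts) * (X * (d⁄dX ℝ Bs)) = X * ((1 - Ts) * (d⁄dX ℝ Bs)) := by ring
      _ = X * ((d⁄dX ℝ Ts) * Bs) := by rw [hd]
      _ = (X * (d⁄dX ℝ Ts)) * Bs := by ring
      _ = (Ts * Bs) * Bs := by rw [hXdT]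
      _ = Ts * Bs^2 := by ring
  calc X * (d⁄dX ℝ Bs) = (Bs * (1 - Ts)) * (X * (d⁄dX ℝ Bs)) := by rw [hBinv, one_mul]
    _ = Bs * ((1 - Ts) * (X * (d⁄dX ℝ Bs))) := by ring
    _ = Bs * (Ts * Bs^2) := by rw [h3]
    _ = Ts * Bs^3 := by ring

lemma hXdBK (K : ℕ) (hK : 1 ≤ K) :
    X * (d⁄dX ℝ (Bs^K)) = (K : ℕ) • (Bs^(K+2) - Bs^(K+1)) := by
  rw [Derivation.leibniz_pow, smul_eq_mul, mul_smul_comm]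
  congr 1
  calc X * (Bs^(K-1) * (d⁄dX ℝ Bs)) = Bs^(K-1) * (X * (d⁄dX ℝ Bs)) := by ring
    _ = Bs^(K-1) * (Ts * Bs^3) := by rw [hXdB]
    _ = (Ts * Bs) * (Bs^(K-1) * Bs^2) := by ring
    _ = (Ts * Bs) * Bs^(K+1) := by rw [← pow_add, show K-1+2 = K+1 by omega]
    _ = (Bs - 1) * Bs^(K+1) := by rw [hTB]
    _ = Bs * Bs^(K+1) - Bs^(K+1) := by ring
    _ = Bs^(K+2) - Bs^(K+1) := by rw [← pow_succ']

lemma main_coeff (K n : ℕ) (hK : 1 ≤ K) (hn : 1 ≤ n) :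
    (n:ℝ) * PowerSeries.coeff n (Bs^K)
      = (K:ℝ) * (PowerSeries.coeff n (Bs^(K+2)) - PowerSeries.coeff n (Bs^(K+1))) := by
  obtain ⟨m, rfl⟩ : ∃ m, n = m + 1 := ⟨n - 1, by omega⟩
  have h := congrArg (PowerSeries.coeff (m+1)) (hXdBK K hK)
  rw [PowerSeries.coeff_succ_X_mul, PowerSeries.coeff_derivative, map_nsmul] at h
  rw [map_sub, nsmul_eq_mul] at h
  push_cast at h ⊢
  linarith [h]

noncomputable def DD (K n : ℕ) : ℝ := ∑ h ∈ Finset.Nat.antidiagonalTuple K n, ∏ k, bb (h k)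

lemma sum_adT_succ {M : Type*} [AddCommMonoid M] (K n : ℕ) (F : (Fin (K+1) → ℕ) → M) :
    ∑ h ∈ Finset.Nat.antidiagonalTuple (K+1) n, F h
      = ∑ p ∈ Finset.HasAntidiagonal.antidiagonal n, ∑ g ∈ Finset.Nat.antidiagonalTuple K p.2,
          F (Fin.cons p.1 g) := by
  rw [Finset.sum_sigma']
  refine Finset.sum_nbij'
    (i := fun h : Fin (K+1) → ℕ =>
      (⟨(h 0, ∑ j : Fin K, h j.succ), Fin.tail h⟩ : (_ : ℕ × ℕ) × (Fin K → ℕ)))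
    (j := fun x : (_ : ℕ × ℕ) × (Fin K → ℕ) => Fin.cons x.1.1 x.2) ?_ ?_ ?_ ?_ ?_
  · intro h hmem
    rw [Finset.Nat.mem_antidiagonalTuple] at hmem
    rw [Finset.mem_sigma]
    refine ⟨?_, ?_⟩
    · rw [Finset.HasAntidiagonal.mem_antidiagonal]
      rw [← hmem, Fin.sum_univ_succ]
    · rw [Finset.Nat.mem_antidiagonalTuple]
      rfl
  · rintro ⟨⟨a, b⟩, g⟩ hmem
    rw [Finset.mem_sigma] at hmem
    obtain ⟨h1, h2⟩ := hmem
    rw [Finset.Nat.mem_antidiagonalTuple] at h2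
    rw [Finset.HasAntidiagonal.mem_antidiagonal] at h1
    rw [Finset.Nat.mem_antidiagonalTuple, Fin.sum_cons]
    simp at h1 h2 ⊢
    omega
  · intro h hmem
    exact Fin.cons_self_tail h
  · rintro ⟨⟨a, b⟩, g⟩ hmem
    rw [Finset.mem_sigma] at hmem
    obtain ⟨h1, h2⟩ := hmem
    rw [Finset.Nat.mem_antidiagonalTuple] at h2
    rw [Finset.HasAntidiagonal.mem_antidiagonal] at h1
    simp only [Fin.cons_zero, Fin.cons_succ, Fin.tail_cons]
    simp only at h2
    subst h2
    rfl
  · intro h hmem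
    simp only
    rw [Fin.cons_self_tail]

lemma DD_coeff : ∀ K n : ℕ, DD K n = PowerSeries.coeff n (Bs^K) := by
  intro K
  induction K with
  | zero =>
    intro n
    rw [pow_zero, DD]
    cases n with
    | zero => simp [Finset.Nat.antidiagonalTuple_zero_zero]
    | succ m => simp [Finset.Nat.antidiagonalTuple_zero_succ]
  | succ K ih =>
    intro n
    rw [pow_succ', PowerSeries.coeff_mul, DD, sum_adT_succ K n]
    apply Finset.sum_congr rfl
    intro p hp
    have hterm : ∀ g : Fin K → ℕ,
        (∏ k : Fin (K+1), bb ((Fin.cons p.1 g : Fin (K+1) → ℕ) k)) = bb p.1 * ∏ i : Fin K, bb (g i) := by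
      intro g
      rw [Fin.prod_univ_succ]
      simp
    rw [Finset.sum_congr rfl (fun g _ => hterm g), ← Finset.mul_sum, ← DD, ih p.2, Bs, coeff_mk]

/-- The multinomial NML normalization term
`C₁(K, n) = ∑_{h₁+⋯+h_K = n} (n!/(h₁!⋯h_K!)) ∏_k (h_k/n)^{h_k}` (with `0^0 = 1`). -/
noncomputable def C1 (K n : ℕ) : ℝ :=
  ∑ h ∈ Finset.Nat.antidiagonalTuple K n,
    (Nat.multinomial Finset.univ h : ℝ) * ∏ k, ((h k : ℝ) / (n : ℝ)) ^ (h k)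

lemma C1_eq (K n : ℕ) (hn : 1 ≤ n) :
    C1 K n = ((n.factorial : ℝ) / (n:ℝ)^n) * DD K n := by
  rw [C1, DD, Finset.mul_sum]
  apply Finset.sum_congr rfl
  intro h hh
  have hs : ∑ k, h k = n := Finset.Nat.mem_antidiagonalTuple.mp hh
  have hmR : (∏ k, ((h k).factorial : ℝ)) * (Nat.multinomial Finset.univ h : ℝ)
      = (n.factorial : ℝ) := by
    rw [← Nat.cast_prod, ← Nat.cast_mul, Nat.multinomial_spec, hs]
  have hprod : ∏ k, ((h k : ℝ)/(n:ℝ))^(h k)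
      = (∏ k, (h k:ℝ)^(h k)) / (n:ℝ)^n := by
    have e1 : ∏ k, ((h k:ℝ)/(n:ℝ))^(h k) = ∏ k, ((h k:ℝ)^(h k) / (n:ℝ)^(h k)) := by
      apply Finset.prod_congr rfl
      intro k _
      rw [div_pow]
    rw [e1, Finset.prod_div_distrib]
    congr 1
    rw [Finset.prod_pow_eq_pow_sum, hs]
  have hbb : ∏ k, bb (h k) = (∏ k, (h k:ℝ)^(h k)) / (∏ k, ((h k).factorial : ℝ)) := by
    simp only [bb]
    rw [Finset.prod_div_distrib]
  rw [hprod, hbb]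
  have hF : (∏ k, ((h k).factorial:ℝ)) ≠ 0 := by positivity
  have hn0 : ((n:ℝ))^n ≠ 0 := by
    apply pow_ne_zero
    exact Nat.cast_ne_zero.mpr (by omega)
  field_simp
  linear_combination (∏ k, ((h k):ℝ)^(h k)) * hmR

theorem C1_recursion (K n : ℕ) (hK : 1 ≤ K) (hn : 1 ≤ n) :
    C1 (K + 2) n = C1 (K + 1) n + ((n : ℝ) / (K : ℝ)) * C1 K n := by
  have h := main_coeff K n hK hn
  rw [← DD_coeff, ← DD_coeff, ← DD_coeff] at h
  have hKne : (K:ℝ) ≠ 0 := Nat.cast_ne_zero.mpr (by omega)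
  have hD : DD (K+2) n = DD (K+1) n + ((n:ℝ)/(K:ℝ)) * DD K n := by
    field_simp
    linarith [h]
  rw [C1_eq (K+2) n hn, C1_eq (K+1) n hn, C1_eq K n hn, hD]
  ring
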